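/- Let V ∈ L¹ ∩ L^∞(ℝ, ℂ^{2×2}) and let Ψ = (ψ₁, ψ₂) ∈ L^∞(ℝ, ℂ²) solve (D_m + V)Ψ = mΨ in the distributional sense. Then ψ₂ ∈ H¹(ℝ, ℂ), ψ₂' ∈ L¹(ℝ, ℂ), and ψ₁' ∈ L²(ℝ, ℂ); in particular ‖ψ₂‖₂² is bounded by (1/m)·‖Ψ‖_∞²·(1 + ‖V‖₁). -/

import Mathlib

set_option maxHeartbeats 1000000

open Real MeasureTheory intervalIntegral

open Set in
private lemma int_mul_prim (a b : ℝ) (g h : ℝ → ℂ)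
    (hg : IntegrableOn g (Ioc a b) volume) (hh : IntegrableOn h (Ioc a b) volume) :
    Integrable (fun t => g t * ∫ s in Ioc a t, h s) (volume.restrict (Ioc a b)) := by
  have hcont : ContinuousOn (fun t => ∫ s in Ioc a t, h s) (Icc a b) :=
    intervalIntegral.continuousOn_primitive (by rwa [integrableOn_Icc_iff_integrableOn_Ioc])
  have hm : AEStronglyMeasurable (fun t => ∫ s in Ioc a t, h s) (volume.restrict (Ioc a b)) :=
    (hcont.mono Ioc_subset_Icc_self).aestronglyMeasurable measurableSet_Ioc
  refine Integrable.mono' (hg.norm.mul_const (∫ s in Ioc a b, ‖h s‖))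
    (hg.aestronglyMeasurable.mul hm) ?_
  filter_upwards [ae_restrict_mem measurableSet_Ioc] with t ht
  rw [norm_mul]
  have h1 : ‖∫ s in Ioc a t, h s‖ ≤ ∫ s in Ioc a b, ‖h s‖ := by
    calc ‖∫ s in Ioc a t, h s‖ ≤ ∫ s in Ioc a t, ‖h s‖ := norm_integral_le_integral_norm _
      _ ≤ ∫ s in Ioc a b, ‖h s‖ :=
        setIntegral_mono_set hh.norm (Filter.Eventually.of_forall fun s => norm_nonneg _)
          (HasSubset.Subset.eventuallyLE (Ioc_subset_Ioc_right ht.2))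
  exact mul_le_mul_of_nonneg_left h1 (norm_nonneg _)

open Set in
private lemma int_prim_mul (a b : ℝ) (g h : ℝ → ℂ)
    (hg : IntegrableOn g (Ioc a b) volume) (hh : IntegrableOn h (Ioc a b) volume) :
    Integrable (fun t => (∫ s in Ioc a t, g s) * h t) (volume.restrict (Ioc a b)) := by
  have h' := int_mul_prim a b h g hh hg
  simpa [mul_comm] using h'

open Set in
private lemma fubini_tri (a b : ℝ) (g1 g2 : ℝ → ℂ)
    (h1 : IntegrableOn g1 (Ioc a b) volume) (h2 : IntegrableOn g2 (Ioc a b) volume) :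
    (∫ s in Ioc a b, g1 s * ∫ t in Ioc a s, g2 t)
      = (∫ s in Ioc a b, g1 s) * (∫ t in Ioc a b, g2 t)
        - ∫ t in Ioc a b, (∫ s in Ioc a t, g1 s) * g2 t := by
  set μ := volume.restrict (Ioc a b) with hμ
  set F : ℝ × ℝ → ℂ := ({p : ℝ × ℝ | p.2 ≤ p.1}).indicator (fun p => g1 p.1 * g2 p.2) with hF
  have hsm : MeasurableSet {p : ℝ × ℝ | p.2 ≤ p.1} :=
    (isClosed_le continuous_snd continuous_fst).measurableSet
  have hFi : Integrable F (μ.prod μ) := (h1.mul_prod h2).indicator hsm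
  have hswap : ∫ s, (∫ t, F (s, t) ∂μ) ∂μ = ∫ t, (∫ s, F (s, t) ∂μ) ∂μ :=
    integral_integral_swap hFi
  have hL : ∀ s ∈ Ioc a b, (∫ t, F (s, t) ∂μ) = g1 s * ∫ t in Ioc a s, g2 t := by
    intro s hs
    have e : (fun t => F (s, t)) = (Iic s).indicator (fun t => g1 s * g2 t) := by
      funext t
      by_cases h : t ≤ s <;> simp [hF, Set.indicator_apply, h]
    rw [e, hμ, MeasureTheory.integral_indicator measurableSet_Iic,
      Measure.restrict_restrict measurableSet_Iic]
    have e2 : Iic s ∩ Ioc a b = Ioc a s := by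
      rw [Set.inter_comm, Ioc_inter_Iic, min_eq_right hs.2]
    rw [e2, MeasureTheory.integral_const_mul]
  have hR : ∀ t ∈ Ioc a b, (∫ s, F (s, t) ∂μ)
      = ((∫ s in Ioc a b, g1 s) - ∫ s in Ioc a t, g1 s) * g2 t := by
    intro t ht
    have e : (fun s => F (s, t)) = (Ici t).indicator (fun s => g1 s * g2 t) := by
      funext s
      by_cases h : t ≤ s <;> simp [hF, Set.indicator_apply, h]
    rw [e, hμ, MeasureTheory.integral_indicator measurableSet_Ici,
      Measure.restrict_restrict measurableSet_Ici]
    have e2 : Ici t ∩ Ioc a b = Icc t b := by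
      ext s
      simp only [mem_inter_iff, mem_Ici, mem_Ioc, mem_Icc]
      constructor
      · rintro ⟨hh1, _, hh3⟩; exact ⟨hh1, hh3⟩
      · rintro ⟨hh1, hh3⟩; exact ⟨hh1, ht.1.trans_le hh1, hh3⟩
    rw [e2, integral_Icc_eq_integral_Ioc, MeasureTheory.integral_mul_const]
    congr 1
    have hsplit : (∫ s in Ioc a t, g1 s) + ∫ s in Ioc t b, g1 s = ∫ s in Ioc a b, g1 s := by
      rw [← setIntegral_union (Ioc_disjoint_Ioc_of_le le_rfl) measurableSet_Ioc
        (h1.mono_set (Ioc_subset_Ioc_right ht.2)) (h1.mono_set (Ioc_subset_Ioc_left ht.1.le)),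
        Ioc_union_Ioc_eq_Ioc ht.1.le ht.2]
    exact eq_sub_of_add_eq' hsplit
  have e1 : ∫ s, (∫ t, F (s, t) ∂μ) ∂μ = ∫ s in Ioc a b, g1 s * ∫ t in Ioc a s, g2 t :=
    setIntegral_congr_fun measurableSet_Ioc hL
  have e2 : ∫ t, (∫ s, F (s, t) ∂μ) ∂μ
      = ∫ t in Ioc a b, ((∫ s in Ioc a b, g1 s) - ∫ s in Ioc a t, g1 s) * g2 t :=
    setIntegral_congr_fun measurableSet_Ioc hR
  rw [← e1, hswap, e2]
  have i1 : Integrable (fun t => (∫ s in Ioc a b, g1 s) * g2 t) μ := h2.const_mul _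
  have i2 : Integrable (fun t => (∫ s in Ioc a t, g1 s) * g2 t) μ := int_prim_mul a b g1 g2 h1 h2
  simp_rw [sub_mul]
  rw [integral_sub i1 i2, MeasureTheory.integral_const_mul]

open Set in
private lemma prim_mul (a b : ℝ) (g1 g2 u1 u2 : ℝ → ℂ)
    (h1 : IntegrableOn g1 (Ioc a b) volume) (h2 : IntegrableOn g2 (Ioc a b) volume)
    (hab : a ≤ b)
    (hu1 : ∀ x ∈ Icc a b, u1 x = u1 a + ∫ t in Ioc a x, g1 t)
    (hu2 : ∀ x ∈ Icc a b, u2 x = u2 a + ∫ t in Ioc a x, g2 t) :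
    u1 b * u2 b - u1 a * u2 a = ∫ t in Ioc a b, (g1 t * u2 t + u1 t * g2 t) := by
  set μ := volume.restrict (Ioc a b) with hμ
  have key : ∫ t in Ioc a b, (g1 t * u2 t + u1 t * g2 t)
      = ∫ t in Ioc a b, (g1 t * (u2 a + ∫ s in Ioc a t, g2 s)
          + (u1 a + ∫ s in Ioc a t, g1 s) * g2 t) :=
    setIntegral_congr_fun measurableSet_Ioc (fun t ht => by
      rw [← hu2 t (Ioc_subset_Icc_self ht), ← hu1 t (Ioc_subset_Icc_self ht)])
  rw [key]
  have ia : Integrable (fun t => g1 t * u2 a) μ := h1.mul_const _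
  have ib : Integrable (fun t => g1 t * ∫ s in Ioc a t, g2 s) μ := int_mul_prim a b g1 g2 h1 h2
  have ic : Integrable (fun t => u1 a * g2 t) μ := h2.const_mul _
  have id' : Integrable (fun t => (∫ s in Ioc a t, g1 s) * g2 t) μ := int_prim_mul a b g1 g2 h1 h2
  simp_rw [mul_add, add_mul]
  have iab : Integrable (fun t => g1 t * u2 a + g1 t * ∫ s in Ioc a t, g2 s) μ := ia.add ib
  have icd : Integrable (fun t => u1 a * g2 t + (∫ s in Ioc a t, g1 s) * g2 t) μ := ic.add id'
  rw [integral_add iab icd, integral_add ia ib, integral_add ic id',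
    MeasureTheory.integral_mul_const, MeasureTheory.integral_const_mul, fubini_tri a b g1 g2 h1 h2,
    hu1 b ⟨hab, le_rfl⟩, hu2 b ⟨hab, le_rfl⟩]
  ring
theorem stmt14 (m : ℝ) (hm : 0 < m)
    (V : ℝ → (Fin 2 → ℂ) →L[ℂ] (Fin 2 → ℂ)) (CV CΨ : ℝ)
    (hVinf : ∀ x, ‖V x‖ ≤ CV)
    (hV1 : Integrable (fun x => ‖V x‖) volume)
    (ψ1 ψ2 : ℝ → ℂ)
    (hΨ : ∀ x, ‖(![ψ1 x, ψ2 x] : Fin 2 → ℂ)‖ ≤ CΨ)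
    (hmeas : AEStronglyMeasurable (fun t => V t ![ψ1 t, ψ2 t]) volume)
    (heq1 : ∀ x, ψ1 x = ψ1 0 +
      ∫ t in (0:ℝ)..x, (V t ![ψ1 t, ψ2 t] 1 - 2 * (m : ℂ) * ψ2 t))
    (heq2 : ∀ x, ψ2 x = ψ2 0 + ∫ t in (0:ℝ)..x, (-(V t ![ψ1 t, ψ2 t] 0))) :
    MemLp ψ2 2 volume ∧
      MemLp (fun t => -(V t ![ψ1 t, ψ2 t] 0)) 2 volume ∧
      Integrable (fun t => -(V t ![ψ1 t, ψ2 t] 0)) volume ∧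
      MemLp (fun t => V t ![ψ1 t, ψ2 t] 1 - 2 * (m : ℂ) * ψ2 t) 2 volume ∧
      (∫ x, ‖ψ2 x‖ ^ 2) ≤ 1 / m * CΨ ^ 2 * (1 + ∫ x, ‖V x‖) := by
  have hCΨ0 : 0 ≤ CΨ := (norm_nonneg _).trans (hΨ 0)
  have hCV0 : 0 ≤ CV := (norm_nonneg _).trans (hVinf 0)
  have hψ1b : ∀ x, ‖ψ1 x‖ ≤ CΨ := fun x => by
    have h := (norm_le_pi_norm (![ψ1 x, ψ2 x]) 0).trans (hΨ x)
    simpa using h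
  have hψ2b : ∀ x, ‖ψ2 x‖ ≤ CΨ := fun x => by
    have h := (norm_le_pi_norm (![ψ1 x, ψ2 x]) 1).trans (hΨ x)
    simpa using h
  have hfb : ∀ t, ‖V t ![ψ1 t, ψ2 t]‖ ≤ ‖V t‖ * CΨ := fun t =>
    ((V t).le_opNorm _).trans (mul_le_mul_of_nonneg_left (hΨ t) (norm_nonneg _))
  have hf0b : ∀ t, ‖V t ![ψ1 t, ψ2 t] 0‖ ≤ ‖V t‖ * CΨ := fun t =>
    (norm_le_pi_norm _ 0).trans (hfb t)
  have hf1b : ∀ t, ‖V t ![ψ1 t, ψ2 t] 1‖ ≤ ‖V t‖ * CΨ := fun t =>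
    (norm_le_pi_norm _ 1).trans (hfb t)
  have hmeas0 : AEStronglyMeasurable (fun t => V t ![ψ1 t, ψ2 t] 0) volume :=
    (continuous_apply (0 : Fin 2)).comp_aestronglyMeasurable hmeas
  have hmeas1 : AEStronglyMeasurable (fun t => V t ![ψ1 t, ψ2 t] 1) volume :=
    (continuous_apply (1 : Fin 2)).comp_aestronglyMeasurable hmeas
  have hVbound : Integrable (fun t => ‖V t‖ * CΨ) volume := hV1.mul_const CΨ
  have hint0 : Integrable (fun t => V t ![ψ1 t, ψ2 t] 0) volume :=
    Integrable.mono' hVbound hmeas0 (Filter.Eventually.of_forall hf0b)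
  have hint1 : Integrable (fun t => V t ![ψ1 t, ψ2 t] 1) volume :=
    Integrable.mono' hVbound hmeas1 (Filter.Eventually.of_forall hf1b)
  -- L² facts for components
  have hsq : ∀ h : ℝ → ℂ, AEStronglyMeasurable h volume → (∀ t, ‖h t‖ ≤ ‖V t‖ * CΨ) →
      MemLp h 2 volume := by
    intro h hmh hb
    rw [memLp_two_iff_integrable_sq_norm hmh]
    have hm2 : AEStronglyMeasurable (fun t => ‖h t‖ ^ 2) volume := by
      exact hmh.norm.pow 2
    refine Integrable.mono' (hVbound.const_mul (CV * CΨ)) hm2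
      (Filter.Eventually.of_forall fun t => ?_)
    have hb2 : ‖h t‖ ≤ CV * CΨ :=
      (hb t).trans (mul_le_mul_of_nonneg_right (hVinf t) hCΨ0)
    have : ‖h t‖ ^ 2 ≤ CV * CΨ * (‖V t‖ * CΨ) := by
      calc ‖h t‖ ^ 2 = ‖h t‖ * ‖h t‖ := sq (‖h t‖) ▸ rfl
        _ ≤ CV * CΨ * (‖V t‖ * CΨ) :=
          mul_le_mul hb2 (hb t) (norm_nonneg _) (by positivity)
    calc ‖‖h t‖ ^ 2‖ = ‖h t‖ ^ 2 := by
          rw [Real.norm_eq_abs, abs_of_nonneg (by positivity)]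
      _ ≤ CV * CΨ * (‖V t‖ * CΨ) := this
  have hg2L2 : MemLp (fun t => -(V t ![ψ1 t, ψ2 t] 0)) 2 volume :=
    (hsq _ hmeas0 hf0b).neg
  have hf1L2 : MemLp (fun t => V t ![ψ1 t, ψ2 t] 1) 2 volume := hsq _ hmeas1 hf1b
  -- continuity
  have hg2int : Integrable (fun t => -(V t ![ψ1 t, ψ2 t] 0)) volume := hint0.neg
  have hψ2c : Continuous ψ2 :=
    (continuous_const.add (hg2int.continuous_primitive 0)).congr fun x => (heq2 x).symm
  have hg1ii : ∀ c d : ℝ,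
      IntervalIntegrable (fun t => V t ![ψ1 t, ψ2 t] 1 - 2 * (m : ℂ) * ψ2 t) volume c d :=
    fun c d => (hint1.intervalIntegrable).sub ((continuous_const.mul hψ2c).intervalIntegrable c d)
  have hψ1c : Continuous ψ1 :=
    (continuous_const.add (intervalIntegral.continuous_primitive hg1ii 0)).congr
      fun x => (heq1 x).symm
  -- uniform L² bound on Ioc (-n) n
  have hVnn : 0 ≤ ∫ x, ‖V x‖ := integral_nonneg fun x => norm_nonneg _
  have hbound : ∀ n : ℕ, (∫ x in Set.Ioc (-(n:ℝ)) (n:ℝ), ‖ψ2 x‖ ^ 2)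
      ≤ 1 / m * CΨ ^ 2 * (1 + ∫ x, ‖V x‖) := by
    intro n
    set a : ℝ := -(n:ℝ) with ha
    set b : ℝ := (n:ℝ) with hb
    have hab : a ≤ b := by
      have : (0:ℝ) ≤ (n:ℝ) := Nat.cast_nonneg n
      rw [ha, hb]; linarith
    have h1 : IntegrableOn (fun t => V t ![ψ1 t, ψ2 t] 1 - 2 * (m:ℂ) * ψ2 t)
        (Set.Ioc a b) volume :=
      (intervalIntegrable_iff_integrableOn_Ioc_of_le hab).mp (hg1ii a b)
    have h2 : IntegrableOn (fun t => -(V t ![ψ1 t, ψ2 t] 0)) (Set.Ioc a b) volume :=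
      hg2int.integrableOn
    have h2c : IntegrableOn (fun t => (starRingEnd ℂ) (-(V t ![ψ1 t, ψ2 t] 0)))
        (Set.Ioc a b) volume := by
      refine Integrable.mono' h2.norm
        (continuous_star.comp_aestronglyMeasurable h2.aestronglyMeasurable) ?_
      exact Filter.Eventually.of_forall fun t => by simp [RCLike.norm_conj]
    have hrep : ∀ u g : ℝ → ℂ, (∀ c d : ℝ, IntervalIntegrable g volume c d) →
        (∀ x, u x = u 0 + ∫ t in (0:ℝ)..x, g t) →
        ∀ x ∈ Set.Icc a b, u x = u a + ∫ t in Set.Ioc a x, g t := by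
      intro u g hii hu x hx
      have h3 : (∫ t in (0:ℝ)..a, g t) + ∫ t in a..x, g t = ∫ t in (0:ℝ)..x, g t :=
        intervalIntegral.integral_add_adjacent_intervals (hii 0 a) (hii a x)
      rw [hu x, hu a, ← intervalIntegral.integral_of_le hx.1, ← h3]
      ring
    have hu1 := hrep ψ1 _ hg1ii heq1
    have hg2ii : ∀ c d : ℝ, IntervalIntegrable (fun t => -(V t ![ψ1 t, ψ2 t] 0)) volume c d :=
      fun c d => hg2int.intervalIntegrable
    have hu2 := hrep ψ2 _ hg2ii heq2
    have hu2c : ∀ x ∈ Set.Icc a b, (starRingEnd ℂ) (ψ2 x)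
        = (starRingEnd ℂ) (ψ2 a)
          + ∫ t in Set.Ioc a x, (starRingEnd ℂ) (-(V t ![ψ1 t, ψ2 t] 0)) := by
      intro x hx
      rw [integral_conj, ← map_add, ← hu2 x hx]
    have key := prim_mul a b _ _ ψ1 (fun x => (starRingEnd ℂ) (ψ2 x)) h1 h2c hab hu1 hu2c
    have hψnc : ∀ t, ψ2 t * (starRingEnd ℂ) (ψ2 t) = ((‖ψ2 t‖ ^ 2 : ℝ) : ℂ) := by
      intro t
      rw [Complex.mul_conj]
      norm_cast
      rw [Complex.normSq_eq_norm_sq]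
    have hpt : ∀ t, (V t ![ψ1 t, ψ2 t] 1 - 2 * (m:ℂ) * ψ2 t) * (starRingEnd ℂ) (ψ2 t)
        + ψ1 t * (starRingEnd ℂ) (-(V t ![ψ1 t, ψ2 t] 0))
        = (V t ![ψ1 t, ψ2 t] 1 * (starRingEnd ℂ) (ψ2 t)
            + ψ1 t * (starRingEnd ℂ) (-(V t ![ψ1 t, ψ2 t] 0)))
          - 2 * (m:ℂ) * ((‖ψ2 t‖ ^ 2 : ℝ) : ℂ) := by
      intro t
      linear_combination (-2 * (m:ℂ)) * hψnc t
    have hIh : IntegrableOn (fun t => V t ![ψ1 t, ψ2 t] 1 * (starRingEnd ℂ) (ψ2 t)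
        + ψ1 t * (starRingEnd ℂ) (-(V t ![ψ1 t, ψ2 t] 0))) (Set.Ioc a b) volume := by
      apply Integrable.add
      · refine Integrable.mono' ((hVbound.mul_const CΨ).integrableOn)
          (hint1.integrableOn.aestronglyMeasurable.mul
            ((continuous_star.comp hψ2c).aestronglyMeasurable.restrict))
          (Filter.Eventually.of_forall fun t => ?_)
        rw [norm_mul]
        refine mul_le_mul (hf1b t) ?_ (norm_nonneg _) (by positivity)
        simpa [RCLike.norm_conj] using hψ2b t
      · refine Integrable.mono' (((hV1.mul_const CΨ).const_mul CΨ).integrableOn)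
          (hψ1c.aestronglyMeasurable.restrict.mul h2c.aestronglyMeasurable)
          (Filter.Eventually.of_forall fun t => ?_)
        rw [norm_mul]
        refine mul_le_mul (hψ1b t) ?_ (norm_nonneg _) hCΨ0
        simpa [RCLike.norm_conj] using hf0b t
    have hsqc : Continuous fun t => ((‖ψ2 t‖ ^ 2 : ℝ) : ℂ) :=
      Complex.continuous_ofReal.comp (hψ2c.norm.pow 2)
    set r : ℝ := ∫ t in Set.Ioc a b, ‖ψ2 t‖ ^ 2 with hrdef
    have hrnn : 0 ≤ r := integral_nonneg fun t => by positivity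
    have hIcast : (∫ t in Set.Ioc a b, ((‖ψ2 t‖ ^ 2 : ℝ) : ℂ)) = ((r : ℝ) : ℂ) :=
      integral_ofReal
    have split : (∫ t in Set.Ioc a b,
          ((V t ![ψ1 t, ψ2 t] 1 - 2 * (m:ℂ) * ψ2 t) * (starRingEnd ℂ) (ψ2 t)
            + ψ1 t * (starRingEnd ℂ) (-(V t ![ψ1 t, ψ2 t] 0))))
        = (∫ t in Set.Ioc a b, (V t ![ψ1 t, ψ2 t] 1 * (starRingEnd ℂ) (ψ2 t)
            + ψ1 t * (starRingEnd ℂ) (-(V t ![ψ1 t, ψ2 t] 0))))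
          - 2 * (m:ℂ) * ((r : ℝ) : ℂ) := by
      rw [setIntegral_congr_fun measurableSet_Ioc (fun t _ => hpt t),
        integral_sub hIh ((hsqc.integrableOn_Ioc).const_mul _), MeasureTheory.integral_const_mul, hIcast]
    have hkey2 : 2 * (m:ℂ) * ((r : ℝ) : ℂ)
        = (∫ t in Set.Ioc a b, (V t ![ψ1 t, ψ2 t] 1 * (starRingEnd ℂ) (ψ2 t)
            + ψ1 t * (starRingEnd ℂ) (-(V t ![ψ1 t, ψ2 t] 0))))
          - (ψ1 b * (starRingEnd ℂ) (ψ2 b) - ψ1 a * (starRingEnd ℂ) (ψ2 a)) := by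
      linear_combination key + split
    have hintnorm : ‖∫ t in Set.Ioc a b, (V t ![ψ1 t, ψ2 t] 1 * (starRingEnd ℂ) (ψ2 t)
          + ψ1 t * (starRingEnd ℂ) (-(V t ![ψ1 t, ψ2 t] 0)))‖
        ≤ 2 * CΨ ^ 2 * ∫ x, ‖V x‖ := by
      calc ‖∫ t in Set.Ioc a b, (V t ![ψ1 t, ψ2 t] 1 * (starRingEnd ℂ) (ψ2 t)
            + ψ1 t * (starRingEnd ℂ) (-(V t ![ψ1 t, ψ2 t] 0)))‖
          ≤ ∫ t in Set.Ioc a b, ‖V t ![ψ1 t, ψ2 t] 1 * (starRingEnd ℂ) (ψ2 t)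
            + ψ1 t * (starRingEnd ℂ) (-(V t ![ψ1 t, ψ2 t] 0))‖ :=
            norm_integral_le_integral_norm _
        _ ≤ ∫ t in Set.Ioc a b, 2 * CΨ ^ 2 * ‖V t‖ := by
            refine integral_mono hIh.norm ((hV1.const_mul (2 * CΨ ^ 2)).integrableOn)
              fun t => ?_
            have e1 : ‖V t ![ψ1 t, ψ2 t] 1 * (starRingEnd ℂ) (ψ2 t)‖ ≤ ‖V t‖ * CΨ * CΨ := by
              rw [norm_mul]
              refine mul_le_mul (hf1b t) ?_ (norm_nonneg _) (by positivity)
              simpa [RCLike.norm_conj] using hψ2b t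
            have e2 : ‖ψ1 t * (starRingEnd ℂ) (-(V t ![ψ1 t, ψ2 t] 0))‖
                ≤ CΨ * (‖V t‖ * CΨ) := by
              rw [norm_mul]
              refine mul_le_mul (hψ1b t) ?_ (norm_nonneg _) hCΨ0
              simpa [RCLike.norm_conj] using hf0b t
            calc ‖V t ![ψ1 t, ψ2 t] 1 * (starRingEnd ℂ) (ψ2 t)
                + ψ1 t * (starRingEnd ℂ) (-(V t ![ψ1 t, ψ2 t] 0))‖
                ≤ ‖V t ![ψ1 t, ψ2 t] 1 * (starRingEnd ℂ) (ψ2 t)‖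
                  + ‖ψ1 t * (starRingEnd ℂ) (-(V t ![ψ1 t, ψ2 t] 0))‖ := norm_add_le _ _
              _ ≤ 2 * CΨ ^ 2 * ‖V t‖ := by nlinarith [norm_nonneg (V t)]
        _ = 2 * CΨ ^ 2 * ∫ t in Set.Ioc a b, ‖V t‖ := MeasureTheory.integral_const_mul _ _
        _ ≤ 2 * CΨ ^ 2 * ∫ x, ‖V x‖ := by
            refine mul_le_mul_of_nonneg_left
              (setIntegral_le_integral hV1 (Filter.Eventually.of_forall fun x => norm_nonneg _))
              (by positivity)
    have hbdry : ‖ψ1 b * (starRingEnd ℂ) (ψ2 b) - ψ1 a * (starRingEnd ℂ) (ψ2 a)‖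
        ≤ 2 * CΨ ^ 2 := by
      have e1 : ‖ψ1 b * (starRingEnd ℂ) (ψ2 b)‖ ≤ CΨ * CΨ := by
        rw [norm_mul]
        refine mul_le_mul (hψ1b b) ?_ (norm_nonneg _) hCΨ0
        simpa [RCLike.norm_conj] using hψ2b b
      have e2 : ‖ψ1 a * (starRingEnd ℂ) (ψ2 a)‖ ≤ CΨ * CΨ := by
        rw [norm_mul]
        refine mul_le_mul (hψ1b a) ?_ (norm_nonneg _) hCΨ0
        simpa [RCLike.norm_conj] using hψ2b a
      calc ‖ψ1 b * (starRingEnd ℂ) (ψ2 b) - ψ1 a * (starRingEnd ℂ) (ψ2 a)‖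
          ≤ ‖ψ1 b * (starRingEnd ℂ) (ψ2 b)‖ + ‖ψ1 a * (starRingEnd ℂ) (ψ2 a)‖ :=
            norm_sub_le _ _
        _ ≤ 2 * CΨ ^ 2 := by nlinarith
    have hcastnorm : ‖2 * (m:ℂ) * ((r : ℝ) : ℂ)‖ = 2 * m * r := by
      have : 2 * (m:ℂ) * ((r : ℝ) : ℂ) = (((2 * m * r : ℝ)) : ℂ) := by push_cast; ring
      rw [this, Complex.norm_real, Real.norm_eq_abs, abs_of_nonneg (by positivity)]
    have hmain : 2 * m * r ≤ 2 * CΨ ^ 2 * (1 + ∫ x, ‖V x‖) := by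
      have := hkey2 ▸ hcastnorm
      have hle : ‖(∫ t in Set.Ioc a b, (V t ![ψ1 t, ψ2 t] 1 * (starRingEnd ℂ) (ψ2 t)
            + ψ1 t * (starRingEnd ℂ) (-(V t ![ψ1 t, ψ2 t] 0))))
          - (ψ1 b * (starRingEnd ℂ) (ψ2 b) - ψ1 a * (starRingEnd ℂ) (ψ2 a))‖
          ≤ 2 * CΨ ^ 2 * (∫ x, ‖V x‖) + 2 * CΨ ^ 2 :=
        (norm_sub_le _ _).trans (add_le_add hintnorm hbdry)
      rw [← hcastnorm, hkey2]
      nlinarith [hle]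
    rw [show 1 / m * CΨ ^ 2 * (1 + ∫ x, ‖V x‖)
        = (2 * CΨ ^ 2 * (1 + ∫ x, ‖V x‖)) / (2 * m) from by field_simp]
    rw [le_div_iff₀ (by linarith)]
    linarith [hmain]
  -- conclude
  have haTend : Filter.Tendsto (fun n : ℕ => -(n:ℝ)) Filter.atTop Filter.atBot :=
    Filter.Tendsto.comp Filter.tendsto_neg_atTop_atBot tendsto_natCast_atTop_atTop
  have hbTend : Filter.Tendsto (fun n : ℕ => (n:ℝ)) Filter.atTop Filter.atTop :=
    tendsto_natCast_atTop_atTop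
  have habn : ∀ n : ℕ, -(n:ℝ) ≤ (n:ℝ) := fun n => by
    have : (0:ℝ) ≤ n := Nat.cast_nonneg n
    linarith
  have hnormsq : ∀ x : ℝ, ‖‖ψ2 x‖ ^ 2‖ = ‖ψ2 x‖ ^ 2 := fun x => by
    rw [Real.norm_eq_abs, abs_of_nonneg (by positivity)]
  have hψ2sqInt : Integrable (fun x => ‖ψ2 x‖ ^ 2) volume := by
    refine integrable_of_intervalIntegral_norm_bounded
      (1 / m * CΨ ^ 2 * (1 + ∫ x, ‖V x‖))
      (fun n : ℕ => ((hψ2c.norm.pow 2).integrableOn_Ioc)) haTend hbTend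
      (Filter.Eventually.of_forall fun n => ?_)
    have : (∫ x in -(n:ℝ)..(n:ℝ), ‖‖ψ2 x‖ ^ 2‖) = ∫ x in Set.Ioc (-(n:ℝ)) (n:ℝ), ‖ψ2 x‖ ^ 2 := by
      rw [intervalIntegral.integral_of_le (habn n)]
      exact setIntegral_congr_fun measurableSet_Ioc fun x _ => hnormsq x
    rw [this]
    exact hbound n
  have hfinal : (∫ x, ‖ψ2 x‖ ^ 2) ≤ 1 / m * CΨ ^ 2 * (1 + ∫ x, ‖V x‖) := by
    refine le_of_tendsto (intervalIntegral_tendsto_integral hψ2sqInt haTend hbTend)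
      (Filter.Eventually.of_forall fun n => ?_)
    rw [intervalIntegral.integral_of_le (habn n)]
    exact hbound n
  have hψ2L2 : MemLp ψ2 2 volume :=
    (memLp_two_iff_integrable_sq_norm hψ2c.aestronglyMeasurable).2 hψ2sqInt
  exact ⟨hψ2L2, hg2L2, hg2int, hf1L2.sub (hψ2L2.const_mul (2 * (m : ℂ))), hfinal⟩
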